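/- Let Φ : [0,∞) → [0,∞) be a strictly increasing bijection of [0,∞) onto itself. Then the map x ↦ x + Φ(x) is a strictly increasing bijection of [0,∞) onto itself, and for every y ≥ 0 one has y − (id + Φ)^{−1}(y) = (id + Φ^{−1})^{−1}(y), where Φ^{−1}, (id + Φ)^{−1}, and (id + Φ^{−1})^{−1} denote the inverse functions on [0,∞). -/

import Mathlib

open NNReal

theorem stmt_8 (Φ : ℝ≥0 → ℝ≥0) (hmono : StrictMono Φ) (hbij : Function.Bijective Φ) :
    StrictMono (fun x => x + Φ x) ∧ Function.Bijective (fun x => x + Φ x) ∧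
      ∀ y : ℝ≥0,
        y - Function.invFun (fun x => x + Φ x) y =
          Function.invFun (fun x : ℝ≥0 => x + Function.invFun Φ x) y := by
  set g : ℝ≥0 → ℝ≥0 := fun x => x + Φ x with hg
  have hgmono : StrictMono g := fun a b hab => add_lt_add hab (hmono hab)
  -- order iso from Φ
  let e : ℝ≥0 ≃o ℝ≥0 := StrictMono.orderIsoOfSurjective Φ hmono hbij.2
  have he : ∀ x, e x = Φ x := fun x => rfl
  have hinvΦ : Function.invFun Φ = fun y => e.symm y := by
    funext y
    have h1 : Φ (e.symm y) = y := by
      have := e.apply_symm_apply y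
      simpa [he] using this
    have : Function.invFun Φ (Φ (e.symm y)) = e.symm y :=
      Function.leftInverse_invFun hbij.1 _
    rw [h1] at this
    exact this
  have hinvmono : StrictMono (Function.invFun Φ) := by
    rw [hinvΦ]; exact e.symm.strictMono
  -- continuity of Φ
  have hΦcont : Continuous Φ := by
    have := e.continuous
    simpa [show ⇑e = Φ from funext he] using this
  have hgcont : Continuous g := continuous_id.add hΦcont
  have hgsurj : Function.Surjective g := by
    intro y
    have hle : (0 : ℝ≥0) ≤ y := zero_le
    have hmem : y ∈ Set.Icc (g 0) (g y) := by
      constructor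
      · calc g 0 = 0 + Φ 0 := rfl
          _ = 0 := by
              have : Φ 0 = 0 := by
                have := (OrderIso.map_bot e); simpa [he] using this
              simp [this]
          _ ≤ y := zero_le
      · simp [hg]
    have := intermediate_value_Icc hle hgcont.continuousOn hmem
    obtain ⟨x, _, hx⟩ := this
    exact ⟨x, hx⟩
  have hgbij : Function.Bijective g := ⟨hgmono.injective, hgsurj⟩
  refine ⟨hgmono, hgbij, fun y => ?_⟩
  set a := Function.invFun g y with ha
  have hga : g a = y := Function.rightInverse_invFun hgsurj y
  have hya : y - a = Φ a := by
    have : a + Φ a = y := hga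
    rw [← this, add_tsub_cancel_left]
  rw [hya]
  -- h x = x + invFun Φ x is injective
  have hhmono : StrictMono (fun x : ℝ≥0 => x + Function.invFun Φ x) :=
    fun s t hst => add_lt_add hst (hinvmono hst)
  have hhinj : Function.Injective (fun x : ℝ≥0 => x + Function.invFun Φ x) :=
    hhmono.injective
  have hval : (fun x : ℝ≥0 => x + Function.invFun Φ x) (Φ a) = y := by
    have : Function.invFun Φ (Φ a) = a := Function.leftInverse_invFun hbij.1 a
    simp only [this]
    rw [add_comm]
    exact hga
  rw [← hval, Function.leftInverse_invFun hhinj]
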